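/- Let X_1, X_2, ... be i.i.d. symmetric random variables. Define p_k = P(max_{1≤j≤k} S_j < 0) and q_k = P(max_{1≤j≤k} S_j ≤ 0) with p_0 = q_0 = 1, where S_j = X_1+...+X_j. Then for every n ≥ 0, the convolution identity ∑_{k=0}^{n} p_k q_{n-k} = 1 holds. -/

import Mathlib

open MeasureTheory ProbabilityTheory Finset

section Helpers

variable {Ω : Type*} [MeasurableSpace Ω] {μ : Measure Ω}

/-- Sum over a subset `t` of a finset `s`, expressed via `attach`. -/
lemma sum_attach_filter {M : Type*} [AddCommMonoid M] (s t : Finset ℕ) (hts : t ⊆ s)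
    (h : ℕ → M) :
    ∑ i ∈ s.attach.filter (fun i : {x // x ∈ s} => (i : ℕ) ∈ t), h ↑i = ∑ i ∈ t, h i := by
  classical
  rw [Finset.sum_filter, Finset.sum_attach s (fun x => if x ∈ t then h x else 0),
    Finset.sum_ite_mem, Finset.inter_eq_right.mpr hts]

/-- Sum over a subset `t` of `range k`, expressed via `Fin k`. -/
lemma sum_fin_filter {M : Type*} [AddCommMonoid M] (k : ℕ) (t : Finset ℕ)
    (hts : t ⊆ Finset.range k) (h : ℕ → M) :
    ∑ i ∈ Finset.univ.filter (fun i : Fin k => (i : ℕ) ∈ t), h ↑i = ∑ i ∈ t, h i := by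
  classical
  rw [Finset.sum_filter, Fin.sum_univ_eq_sum_range (fun i => if i ∈ t then h i else 0),
    Finset.sum_ite_mem, Finset.inter_eq_right.mpr hts]

/-- Reindexing an independent family along an injective map. -/
lemma iIndepFun_reindex {ι ι' : Type*} {β : Type*} [mβ : MeasurableSpace β] {f : ι → Ω → β}
    (h : iIndepFun f μ) (g : ι' → ι) (hg : Function.Injective g) :
    iIndepFun (fun j => f (g j)) μ := by
  classical
  rw [iIndepFun_iff_measure_inter_preimage_eq_mul] at h ⊢
  intro S sets hsets
  set sets' : ι → Set β := fun i => ⋂ j ∈ S.filter (fun j => g j = i), sets j with hsets'def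
  have key : ∀ j ∈ S, sets' (g j) = sets j := by
    intro j hj
    have hfil : S.filter (fun j' => g j' = g j) = {j} := by
      ext j'
      simp only [Finset.mem_filter, Finset.mem_singleton]
      constructor
      · rintro ⟨_, e⟩; exact hg e
      · rintro rfl; exact ⟨hj, rfl⟩
    rw [show sets' (g j) = ⋂ j' ∈ S.filter (fun j' => g j' = g j), sets j' from rfl, hfil]
    simp
  have hsets'meas : ∀ i ∈ S.image g, MeasurableSet (sets' i) := by
    intro i _
    apply Finset.measurableSet_biInter
    intro j hj
    exact hsets j (Finset.mem_filter.mp hj).1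
  have h1 := h (S.image g) (sets := sets') hsets'meas
  have e1 : (⋂ i ∈ S.image g, f i ⁻¹' sets' i) = ⋂ j ∈ S, f (g j) ⁻¹' sets j := by
    ext ω
    simp only [Set.mem_iInter, Finset.mem_image]
    constructor
    · intro hω j hj
      have := hω (g j) ⟨j, hj, rfl⟩
      rwa [key j hj] at this
    · rintro hω i ⟨j, hj, rfl⟩
      rw [key j hj]
      exact hω j hj
  have e2 : ∏ i ∈ S.image g, μ (f i ⁻¹' sets' i) = ∏ j ∈ S, μ (f (g j) ⁻¹' sets j) := by
    rw [Finset.prod_image (fun a _ b _ e => hg e)]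
    exact Finset.prod_congr rfl fun j hj => by rw [key j hj]
  rw [e1, e2] at h1
  simpa using h1

/-- The joint law of finitely many i.i.d. random variables is the product measure. -/
lemma map_iid_pi [IsProbabilityMeasure μ] {m : ℕ} {Y : Fin m → Ω → ℝ}
    (hmeas : ∀ i, Measurable (Y i))
    (hind : iIndepFun Y μ)
    {ν : Measure ℝ} [IsProbabilityMeasure ν]
    (hlaw : ∀ i, Measure.map (Y i) μ = ν) :
    Measure.map (fun ω i => Y i ω) μ = Measure.pi (fun _ => ν) := by
  refine (Measure.pi_eq (μ := fun _ : Fin m => ν) fun s hs => ?_).symm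
  have hf : Measurable (fun ω (i : Fin m) => Y i ω) := measurable_pi_lambda _ hmeas
  rw [Measure.map_apply hf (MeasurableSet.univ_pi hs)]
  have hpre : (fun ω (i : Fin m) => Y i ω) ⁻¹' Set.pi Set.univ s
      = ⋂ i ∈ Finset.univ, Y i ⁻¹' s i := by
    ext ω
    simp [Set.mem_pi]
  rw [hpre, hind.measure_inter_preimage_eq_mul Finset.univ (fun i _ => hs i)]
  refine (Finset.prod_congr rfl fun i _ => ?_).symm
  rw [← hlaw i, Measure.map_apply (hmeas i) (hs i)]

/-- Random vectors with the same law assign the same probability to measurable sets. -/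
lemma prob_preimage_eq {α : Type*} [MeasurableSpace α] {V V' : Ω → α}
    (hV : Measurable V) (hV' : Measurable V')
    (hlaw : Measure.map V μ = Measure.map V' μ) {G : Set α} (hG : MeasurableSet G) :
    μ (V ⁻¹' G) = μ (V' ⁻¹' G) := by
  rw [← Measure.map_apply hV hG, hlaw, Measure.map_apply hV' hG]

lemma measurableSet_forall_mem {Ω : Type*} [MeasurableSpace Ω] (F : Finset ℕ)
    (t : ℕ → Set Ω) (ht : ∀ j ∈ F, MeasurableSet (t j)) :
    MeasurableSet {ω | ∀ j ∈ F, ω ∈ t j} := by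
  have : {ω | ∀ j ∈ F, ω ∈ t j} = ⋂ j ∈ F, t j := by ext ω; simp
  rw [this]; exact Finset.measurableSet_biInter _ ht

lemma meas_sum_fin (m : ℕ) (t : Finset (Fin m)) :
    Measurable (fun x : Fin m → ℝ => ∑ i ∈ t, x i) :=
  Finset.measurable_sum t fun i _ => measurable_pi_apply i

end Helpers

/-- For i.i.d. symmetric random variables, with
`p_k = P(max_{1≤j≤k} S_j < 0)`, `q_k = P(max_{1≤j≤k} S_j ≤ 0)` (and `p_0 = q_0 = 1`),
the convolution identity `∑_{k=0}^n p_k q_{n-k} = 1` holds for every `n ≥ 0`. -/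
theorem persistence_convolution_identity
    {Ω : Type*} [MeasureSpace Ω] [IsProbabilityMeasure (ℙ : Measure Ω)]
    (X : ℕ → Ω → ℝ) (hmeas : ∀ i, Measurable (X i))
    (hindep : iIndepFun X ℙ)
    (hid : ∀ i, IdentDistrib (X i) (X 1) ℙ ℙ)
    (hsymm : IdentDistrib (X 1) (fun ω => -X 1 ω) ℙ ℙ)
    (S : ℕ → Ω → ℝ) (hS : ∀ k ω, S k ω = ∑ i ∈ Finset.Icc 1 k, X i ω)
    (p q : ℕ → ℝ)
    (hp : ∀ k, p k = (ℙ {ω | ∀ j ∈ Finset.Icc 1 k, S j ω < 0}).toReal)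
    (hq : ∀ k, q k = (ℙ {ω | ∀ j ∈ Finset.Icc 1 k, S j ω ≤ 0}).toReal)
    (n : ℕ) :
    ∑ k ∈ Finset.range (n + 1), p k * q (n - k) = 1 := by
  classical
  -- the common law
  set μ : Measure ℝ := Measure.map (X 1) ℙ with hμdef
  have hμprob : IsProbabilityMeasure μ := Measure.isProbabilityMeasure_map (hmeas 1).aemeasurable
  have hlawX : ∀ i, Measure.map (X i) ℙ = μ := fun i => (hid i).map_eq
  have hlawnegX : ∀ i, Measure.map (fun ω => -X i ω) ℙ = μ := fun i =>
    (((hid i).comp measurable_neg).trans hsymm.symm).map_eq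
  -- shifted increments
  set Y : ℕ → Ω → ℝ := fun i => X (i + 1) with hYdef
  have hYX : ∀ i, Y i = X (i + 1) := fun _ => rfl
  have hYmeas : ∀ i, Measurable (Y i) := fun i => hmeas _
  have hS' : ∀ j ω, S j ω = ∑ i ∈ Finset.range j, Y i ω := by
    intro j ω
    rw [hS, ← Finset.Ico_add_one_right_eq_Icc, Finset.sum_Ico_eq_sum_range, Nat.add_sub_cancel]
    exact Finset.sum_congr rfl fun i _ => by rw [hYX, Nat.add_comm]
  have hIcoY : ∀ (a b : ℕ) (ω : Ω),
      ∑ i ∈ Finset.Ico a b, Y i ω = ∑ i ∈ Finset.Icc (a + 1) b, X i ω := by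
    intro a b ω
    rw [← Finset.Ico_add_one_right_eq_Icc, Finset.sum_Ico_eq_sum_range, Finset.sum_Ico_eq_sum_range,
      show b + 1 - (a + 1) = b - a by omega]
    exact Finset.sum_congr rfl fun l _ => by
      rw [hYX, show a + l + 1 = a + 1 + l by omega]
  -- laws of vectors of increments
  have hvec : ∀ (a m : ℕ),
      Measure.map (fun ω (i : Fin m) => Y (a + ↑i) ω) ℙ = Measure.pi (fun _ => μ) := by
    intro a m
    have hinj : Function.Injective (fun i : Fin m => a + ↑i + 1) := by
      intro i j h; simp only at h; exact Fin.ext (by omega)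
    exact map_iid_pi (fun i => hYmeas _) (iIndepFun_reindex hindep _ hinj) (fun i => hlawX _)
  have hvec0 : ∀ m : ℕ,
      Measure.map (fun ω (i : Fin m) => Y ↑i ω) ℙ = Measure.pi (fun _ => μ) := by
    intro m; have := hvec 0 m; simpa using this
  have hvecflip : ∀ k : ℕ,
      Measure.map (fun ω (i : Fin k) => -Y (k - 1 - ↑i) ω) ℙ = Measure.pi (fun _ => μ) := by
    intro k
    have hinj : Function.Injective (fun i : Fin k => (k - 1 - ↑i) + 1) := by
      intro i j h; simp only at h
      exact Fin.ext (by have hi := i.2; have hj := j.2; omega)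
    have h1 : iIndepFun
        (fun i : Fin k => X ((k - 1 - ↑i) + 1)) ℙ := iIndepFun_reindex hindep _ hinj
    have h2 := h1.comp (fun _ => (Neg.neg : ℝ → ℝ)) (fun _ => measurable_neg)
    exact map_iid_pi (fun i => (hYmeas _).neg) h2 (fun i => hlawnegX _)
  -- the events
  set B : ℕ → Set Ω := fun k =>
    {ω | ∀ j ∈ Finset.Icc 1 k, 0 < ∑ i ∈ Finset.Ico (k - j) k, Y i ω} with hBdef
  set C : ℕ → Set Ω := fun k =>
    {ω | ∀ j ∈ Finset.Icc 1 (n - k), ∑ i ∈ Finset.Ico k (k + j), Y i ω ≤ 0} with hCdef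
  have hBmem : ∀ k ω, ω ∈ B k ↔ ∀ j ∈ Finset.Icc 1 k,
      0 < ∑ i ∈ Finset.Ico (k - j) k, Y i ω := fun _ _ => Iff.rfl
  have hCmem : ∀ k ω, ω ∈ C k ↔ ∀ j ∈ Finset.Icc 1 (n - k),
      ∑ i ∈ Finset.Ico k (k + j), Y i ω ≤ 0 := fun _ _ => Iff.rfl
  have hBmeas : ∀ k, MeasurableSet (B k) := fun k =>
    measurableSet_forall_mem _ _ (fun j _ =>
      measurableSet_lt measurable_const (Finset.measurable_sum _ fun i _ => hYmeas i))
  have hCmeas : ∀ k, MeasurableSet (C k) := fun k =>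
    measurableSet_forall_mem _ _ (fun j _ =>
      measurableSet_le (Finset.measurable_sum _ fun i _ => hYmeas i) measurable_const)
  -- ℙ (B k) = ℙ (p-event)
  have hBp : ∀ k : ℕ, ℙ (B k) = ℙ {ω | ∀ j ∈ Finset.Icc 1 k, S j ω < 0} := by
    intro k
    set GB : Set (Fin k → ℝ) := {x | ∀ j ∈ Finset.Icc 1 k,
      0 < ∑ i ∈ Finset.univ.filter (fun i : Fin k => (i : ℕ) ∈ Finset.Ico (k - j) k), x i}
      with hGBdef
    have hGBmeas : MeasurableSet GB := measurableSet_forall_mem _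
      (fun j => {x : Fin k → ℝ |
        0 < ∑ i ∈ Finset.univ.filter (fun i : Fin k => (i : ℕ) ∈ Finset.Ico (k - j) k), x i})
      (fun j _ => measurableSet_lt measurable_const (meas_sum_fin _ _))
    have hV : Measurable (fun ω (i : Fin k) => Y ↑i ω) :=
      measurable_pi_lambda _ (fun i => hYmeas _)
    have hV' : Measurable (fun ω (i : Fin k) => -Y (k - 1 - ↑i) ω) :=
      measurable_pi_lambda _ (fun i => (hYmeas _).neg)
    have e1 : B k = (fun ω (i : Fin k) => Y ↑i ω) ⁻¹' GB := by
      ext ω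
      rw [hBmem]
      simp only [Set.mem_preimage, hGBdef, Set.mem_setOf_eq]
      refine forall_congr' fun j => forall_congr' fun hj => ?_
      rw [sum_fin_filter k (Finset.Ico (k - j) k)
        (fun x hx => by simp only [Finset.mem_Ico] at hx; simp only [Finset.mem_range]; omega)
        (fun m => Y m ω)]
    have e2 : {ω | ∀ j ∈ Finset.Icc 1 k, S j ω < 0}
        = (fun ω (i : Fin k) => -Y (k - 1 - ↑i) ω) ⁻¹' GB := by
      ext ω
      simp only [Set.mem_preimage, hGBdef, Set.mem_setOf_eq]
      refine forall_congr' fun j => forall_congr' fun hj => ?_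
      simp only [Finset.mem_Icc] at hj
      rw [sum_fin_filter k (Finset.Ico (k - j) k)
        (fun x hx => by simp only [Finset.mem_Ico] at hx; simp only [Finset.mem_range]; omega)
        (fun m => -Y (k - 1 - m) ω)]
      have hsum : ∑ m ∈ Finset.Ico (k - j) k, Y (k - 1 - m) ω
          = ∑ l ∈ Finset.range j, Y l ω := by
        rw [Finset.sum_Ico_eq_sum_range, show k - (k - j) = j by omega]
        rw [show (∑ l ∈ Finset.range j, Y (k - 1 - (k - j + l)) ω)
            = ∑ l ∈ Finset.range j, Y (j - 1 - l) ω from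
          Finset.sum_congr rfl fun l hl => by
            rw [show k - 1 - (k - j + l) = j - 1 - l by
              have := Finset.mem_range.mp hl; omega]]
        exact Finset.sum_range_reflect (fun l => Y l ω) j
      rw [Finset.sum_neg_distrib, hsum, ← hS']
      constructor
      · intro h; linarith
      · intro h; linarith
    rw [e1, e2]
    exact prob_preimage_eq hV hV' ((hvec0 k).trans (hvecflip k).symm) hGBmeas
  -- ℙ (C k) = ℙ (q-event)
  have hCq : ∀ k : ℕ, ℙ (C k) = ℙ {ω | ∀ j ∈ Finset.Icc 1 (n - k), S j ω ≤ 0} := by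
    intro k
    set m := n - k with hm
    set GQ : Set (Fin m → ℝ) := {x | ∀ j ∈ Finset.Icc 1 m,
      ∑ i ∈ Finset.univ.filter (fun i : Fin m => (i : ℕ) ∈ Finset.range j), x i ≤ 0}
      with hGQdef
    have hGQmeas : MeasurableSet GQ := measurableSet_forall_mem _
      (fun j => {x : Fin m → ℝ |
        ∑ i ∈ Finset.univ.filter (fun i : Fin m => (i : ℕ) ∈ Finset.range j), x i ≤ 0})
      (fun j _ => measurableSet_le (meas_sum_fin _ _) measurable_const)
    have hW : Measurable (fun ω (i : Fin m) => Y (k + ↑i) ω) :=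
      measurable_pi_lambda _ (fun i => hYmeas _)
    have hW0 : Measurable (fun ω (i : Fin m) => Y ↑i ω) :=
      measurable_pi_lambda _ (fun i => hYmeas _)
    have e1 : C k = (fun ω (i : Fin m) => Y (k + ↑i) ω) ⁻¹' GQ := by
      ext ω
      rw [hCmem]
      simp only [Set.mem_preimage, hGQdef, Set.mem_setOf_eq]
      refine forall_congr' fun j => forall_congr' fun hj => ?_
      simp only [Finset.mem_Icc] at hj
      rw [sum_fin_filter m (Finset.range j)
        (fun x hx => by simp only [Finset.mem_range] at hx ⊢; omega)
        (fun l => Y (k + l) ω)]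
      rw [Finset.sum_Ico_eq_sum_range, show k + j - k = j by omega]
    have e2 : {ω | ∀ j ∈ Finset.Icc 1 (n - k), S j ω ≤ 0}
        = (fun ω (i : Fin m) => Y ↑i ω) ⁻¹' GQ := by
      ext ω
      simp only [Set.mem_preimage, hGQdef, Set.mem_setOf_eq]
      refine forall_congr' fun j => forall_congr' fun hj => ?_
      simp only [Finset.mem_Icc] at hj
      rw [sum_fin_filter m (Finset.range j)
        (fun x hx => by simp only [Finset.mem_range] at hx ⊢; omega)
        (fun l => Y l ω), ← hS']
    rw [e1, e2]
    exact prob_preimage_eq hW hW0 ((hvec k m).trans (hvec0 m).symm) hGQmeas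
  -- independence of B k and C k
  have hBC : ∀ k : ℕ, k ≤ n → ℙ (B k ∩ C k) = ℙ (B k) * ℙ (C k) := by
    intro k hkn
    have hdisj : Disjoint (Finset.Icc 1 k) (Finset.Icc (k + 1) n) := by
      rw [Finset.disjoint_left]
      intro x hx hx'
      simp only [Finset.mem_Icc] at hx hx'
      omega
    have hIF := hindep.indepFun_finset (Finset.Icc 1 k) (Finset.Icc (k + 1) n) hdisj hmeas
    set EB : Set ({x // x ∈ Finset.Icc 1 k} → ℝ) := {y | ∀ j ∈ Finset.Icc 1 k,
      0 < ∑ i ∈ (Finset.Icc 1 k).attach.filter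
        (fun i : {x // x ∈ Finset.Icc 1 k} => (i : ℕ) ∈ Finset.Icc (k - j + 1) k), y i}
      with hEBdef
    set EC : Set ({x // x ∈ Finset.Icc (k + 1) n} → ℝ) := {y | ∀ j ∈ Finset.Icc 1 (n - k),
      ∑ i ∈ (Finset.Icc (k + 1) n).attach.filter
        (fun i : {x // x ∈ Finset.Icc (k + 1) n} => (i : ℕ) ∈ Finset.Icc (k + 1) (k + j)), y i ≤ 0}
      with hECdef
    have hEBmeas : MeasurableSet EB := measurableSet_forall_mem _
      (fun j => {y : {x // x ∈ Finset.Icc 1 k} → ℝ |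
        0 < ∑ i ∈ (Finset.Icc 1 k).attach.filter
          (fun i : {x // x ∈ Finset.Icc 1 k} => (i : ℕ) ∈ Finset.Icc (k - j + 1) k), y i})
      (fun j _ => measurableSet_lt measurable_const
        (Finset.measurable_sum _ fun i _ => measurable_pi_apply i))
    have hECmeas : MeasurableSet EC := measurableSet_forall_mem _
      (fun j => {y : {x // x ∈ Finset.Icc (k + 1) n} → ℝ |
        ∑ i ∈ (Finset.Icc (k + 1) n).attach.filter
          (fun i : {x // x ∈ Finset.Icc (k + 1) n} => (i : ℕ) ∈ Finset.Icc (k + 1) (k + j)),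
            y i ≤ 0})
      (fun j _ => measurableSet_le
        (Finset.measurable_sum _ fun i _ => measurable_pi_apply i) measurable_const)
    have eB : B k = (fun ω (i : {x // x ∈ Finset.Icc 1 k}) => X ↑i ω) ⁻¹' EB := by
      ext ω
      rw [hBmem]
      simp only [Set.mem_preimage, hEBdef, Set.mem_setOf_eq]
      refine forall_congr' fun j => forall_congr' fun hj => ?_
      simp only [Finset.mem_Icc] at hj
      rw [sum_attach_filter (Finset.Icc 1 k) (Finset.Icc (k - j + 1) k)
        (fun x hx => by simp only [Finset.mem_Icc] at hx ⊢; omega) (fun i => X i ω)]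
      rw [hIcoY, show k - j + 1 = k - j + 1 from rfl]
    have eC : C k = (fun ω (i : {x // x ∈ Finset.Icc (k + 1) n}) => X ↑i ω) ⁻¹' EC := by
      ext ω
      rw [hCmem]
      simp only [Set.mem_preimage, hECdef, Set.mem_setOf_eq]
      refine forall_congr' fun j => forall_congr' fun hj => ?_
      simp only [Finset.mem_Icc] at hj
      rw [sum_attach_filter (Finset.Icc (k + 1) n) (Finset.Icc (k + 1) (k + j))
        (fun x hx => by simp only [Finset.mem_Icc] at hx ⊢; omega) (fun i => X i ω)]
      rw [hIcoY]
    rw [eB, eC]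
    exact hIF.measure_inter_preimage_eq_mul _ _ hEBmeas hECmeas
  -- the events (B k ∩ C k) for k ≤ n partition Ω
  have hdisj2 : ∀ k l : ℕ, k < l → l ≤ n → ∀ ω : Ω, ω ∈ B k ∩ C k → ω ∈ B l ∩ C l → False := by
    intro k l hkl hln ω hk hl
    obtain ⟨hBk, hCk⟩ := hk
    obtain ⟨hBl, hCl⟩ := hl
    rw [hCmem] at hCk
    rw [hBmem] at hBl
    have h1 := hCk (l - k) (by simp only [Finset.mem_Icc]; omega)
    have h2 := hBl (l - k) (by simp only [Finset.mem_Icc]; omega)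
    rw [show k + (l - k) = l by omega] at h1
    rw [show l - (l - k) = k by omega] at h2
    linarith
  have hPairwise : Set.PairwiseDisjoint ↑(Finset.range (n + 1))
      (fun k => B k ∩ C k) := by
    intro k hk l hl hkl
    simp only [Finset.coe_range, Set.mem_Iio] at hk hl
    rw [Function.onFun, Set.disjoint_left]
    intro ω hωk hωl
    rcases Nat.lt_or_ge k l with h | h
    · exact hdisj2 k l h (by omega) ω hωk hωl
    · exact hdisj2 l k (by omega) (by omega) ω hωl hωk
  have hcover : (⋃ k ∈ Finset.range (n + 1), (B k ∩ C k)) = Set.univ := by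
    apply Set.eq_univ_of_forall
    intro ω
    set T : ℕ → ℝ := fun j => ∑ i ∈ Finset.range j, Y i ω with hTdef
    obtain ⟨b, hb, hbmax⟩ := Finset.exists_max_image (Finset.range (n + 1)) T
      ⟨0, Finset.mem_range.mpr (by omega)⟩
    have hex : ∃ k, k ≤ n ∧ ∀ j ≤ n, T j ≤ T k := by
      refine ⟨b, by have := Finset.mem_range.mp hb; omega, fun j hj => ?_⟩
      exact hbmax j (Finset.mem_range.mpr (by omega))
    set k := Nat.find hex with hkdef
    obtain ⟨hkn, hkmax⟩ := Nat.find_spec hex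
    have hsplit : ∀ a b : ℕ, a ≤ b → T a + ∑ i ∈ Finset.Ico a b, Y i ω = T b := by
      intro a b hab
      rw [hTdef]
      simp only [Finset.range_eq_Ico]
      exact Finset.sum_Ico_consecutive (fun i => Y i ω) (Nat.zero_le _) hab
    have hmemB : ω ∈ B k := by
      rw [hBmem]
      intro j hj
      simp only [Finset.mem_Icc] at hj
      have hlt : T (k - j) < T k := by
        rcases lt_or_ge (T (k - j)) (T k) with h | h
        · exact h
        · exfalso
          have hmin := Nat.find_min hex (show k - j < k by omega)
          exact hmin ⟨by omega, fun j' hj' => le_trans (hkmax j' hj') h⟩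
      have := hsplit (k - j) k (by omega)
      linarith
    have hmemC : ω ∈ C k := by
      rw [hCmem]
      intro j hj
      simp only [Finset.mem_Icc] at hj
      have h1 := hkmax (k + j) (by omega)
      have := hsplit k (k + j) (by omega)
      linarith
    simp only [Set.mem_iUnion]
    exact ⟨k, Finset.mem_range.mpr (by omega), hmemB, hmemC⟩
  have hsum1 : ∑ k ∈ Finset.range (n + 1), ℙ (B k ∩ C k) = 1 := by
    rw [← measure_biUnion_finset hPairwise (fun k _ => (hBmeas k).inter (hCmeas k)),
      hcover, measure_univ]
  -- conclude
  have hterm : ∀ k ∈ Finset.range (n + 1), p k * q (n - k) = (ℙ (B k ∩ C k)).toReal := by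
    intro k hk
    have hkn : k ≤ n := by have := Finset.mem_range.mp hk; omega
    rw [hp, hq, hBC k hkn, ← hBp, ← hCq, ENNReal.toReal_mul]
  calc ∑ k ∈ Finset.range (n + 1), p k * q (n - k)
      = ∑ k ∈ Finset.range (n + 1), (ℙ (B k ∩ C k)).toReal :=
        Finset.sum_congr rfl hterm
    _ = (∑ k ∈ Finset.range (n + 1), ℙ (B k ∩ C k)).toReal :=
        (ENNReal.toReal_sum (fun k _ => measure_ne_top _ _)).symm
    _ = 1 := by rw [hsum1, ENNReal.toReal_one]
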